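/- Let C ⊆ ℝ^n, let f : ℝ^n → ℝ be bounded above on C, and let sequences (x^(k))_{k≥0} in C and (d^(k))_{k≥0} in ℝ^n satisfy: (i) each d^(k) is a subgradient of f at x^(k), i.e., f(y) ≥ f(x^(k)) + ⟨d^(k), y − x^(k)⟩ for all y ∈ ℝ^n; and (ii) x^(k+1) maximizes the linear functional ⟨·, d^(k)⟩ over C, i.e., x^(k+1) ∈ C and ⟨z, d^(k)⟩ ≤ ⟨x^(k+1), d^(k)⟩ for all z ∈ C. Then the sequence (f(x^(k)))_{k≥0} is non-decreasing and convergent, and for every ε > 0 there exists k ≥ 1 such that f(x^(k)) − f(x^(k−1)) < ε. -/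
import Mathlib


open scoped RealInnerProductSpace

/-- monotonicity, convergence, and finite termination (Theorem 3 / Theorem 1
of the paper) of the subgradient-based minorize–maximize iteration: if `f` is bounded
above on `C`, each `d k` is a subgradient of `f` at `x k`, and `x (k+1)` maximizes
`⟨·, d k⟩` over `C`, then `f (x k)` is non-decreasing and convergent, and for every
`ε > 0` some consecutive increment is below `ε`. -/
theorem stmt_5 {n : ℕ} (C : Set (EuclideanSpace ℝ (Fin n)))
    (f : EuclideanSpace ℝ (Fin n) → ℝ) (hbdd : BddAbove (f '' C))
    (x d : ℕ → EuclideanSpace ℝ (Fin n))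
    (hxC : ∀ k, x k ∈ C)
    (hsub : ∀ k, ∀ y : EuclideanSpace ℝ (Fin n), f y ≥ f (x k) + ⟪d k, y - x k⟫)
    (hmax : ∀ k, ∀ z ∈ C, ⟪z, d k⟫ ≤ ⟪x (k + 1), d k⟫) :
    Monotone (fun k => f (x k)) ∧
      (∃ L : ℝ, Filter.Tendsto (fun k => f (x k)) Filter.atTop (nhds L)) ∧
      ∀ ε > (0 : ℝ), ∃ k ≥ 1, f (x k) - f (x (k - 1)) < ε := by
  have hstep : ∀ k, f (x k) ≤ f (x (k + 1)) := by
    intro k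
    have h1 := hsub k (x (k + 1))
    have h2 : (0 : ℝ) ≤ ⟪d k, x (k + 1) - x k⟫ := by
      have := hmax k (x k) (hxC k)
      rw [real_inner_comm (d k) (x k), real_inner_comm (d k) (x (k + 1))] at this
      rw [inner_sub_right]
      linarith
    linarith
  have hmono : Monotone (fun k => f (x k)) := monotone_nat_of_le_succ hstep
  have hbdd' : BddAbove (Set.range fun k => f (x k)) := by
    obtain ⟨B, hB⟩ := hbdd
    exact ⟨B, by rintro _ ⟨k, rfl⟩; exact hB ⟨x k, hxC k, rfl⟩⟩
  obtain ⟨L, hL⟩ := tendsto_of_monotone hmono |>.resolve_left (fun h => by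
    obtain ⟨B, hB⟩ := hbdd'
    obtain ⟨k, hk⟩ := (h.eventually_gt_atTop B).exists
    exact absurd (hB ⟨k, rfl⟩) (not_le.mpr hk))
  refine ⟨hmono, ⟨L, hL⟩, ?_⟩
  intro ε hε
  by_contra h
  push_neg at h
  have hdiff : Filter.Tendsto (fun k => f (x (k + 1)) - f (x k)) Filter.atTop (nhds 0) := by
    simpa using (hL.comp (Filter.tendsto_add_atTop_nat 1)).sub hL
  obtain ⟨k, hk⟩ := (hdiff.eventually (gt_mem_nhds hε)).exists
  exact absurd hk (not_lt.mpr (by simpa using h (k + 1) (Nat.le_add_left 1 k)))
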